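/- Let B be an n×n real symmetric positive semi-definite matrix with rank(B) ≥ n−1, partitioned as B = [[B11, b],[b^T, β]] with B11 of order n−1. Suppose B11 = C11 + C12 where C11 is symmetric positive definite with λ_min(C11) > β, and C12 is symmetric positive semi-definite. Then λ_min(B) ≥ β − b^T C11^{−1} b − β·‖C11^{−1} b‖₂² / (1 − β·‖C11^{−1}‖₂). -/

import Mathlib

open Matrix

/-- Spectral (L2 operator) norm of a real matrix. -/
noncomputable def specNorm {ι κ : Type*} [Fintype ι] [Fintype κ] [DecidableEq κ]
    (A : Matrix ι κ ℝ) : ℝ :=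
  ‖LinearMap.toContinuousLinearMap
      (Matrix.toEuclideanLin A : EuclideanSpace ℝ κ →ₗ[ℝ] EuclideanSpace ℝ ι)‖

/-- Euclidean norm of a real vector. -/
noncomputable def enorm' {ι : Type*} [Fintype ι] (v : ι → ℝ) : ℝ :=
  Real.sqrt (∑ i, v i ^ 2)

/-- The `j`-th largest eigenvalue (1-indexed, non-increasing order), realized as the
`j`-th largest root (with multiplicity) of the characteristic polynomial. -/
noncomputable def eigvalDesc {ι : Type*} [Fintype ι] [DecidableEq ι]
    (A : Matrix ι ι ℝ) (j : ℕ) : ℝ :=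
  (A.charpoly.roots.sort (· ≤ ·)).getD (Fintype.card ι - j) 0

/-- The smallest eigenvalue. -/
noncomputable def lmin {ι : Type*} [Fintype ι] [DecidableEq ι] (A : Matrix ι ι ℝ) : ℝ :=
  eigvalDesc A (Fintype.card ι)

/-- The `j`-th largest singular value (1-indexed, non-increasing order). -/
noncomputable def singvalDesc {ι κ : Type*} [Fintype ι] [Fintype κ] [DecidableEq κ]
    (A : Matrix ι κ ℝ) (j : ℕ) : ℝ :=
  Real.sqrt (eigvalDesc (Aᵀ * A) j)

/-- The smallest singular value. -/
noncomputable def smin {ι κ : Type*} [Fintype ι] [Fintype κ] [DecidableEq κ]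
    (A : Matrix ι κ ℝ) : ℝ :=
  Real.sqrt (lmin (Aᵀ * A))


open Polynomial

section Aux
set_option linter.unusedSectionVars false
variable {ι : Type*} [Fintype ι] [DecidableEq ι] {A : Matrix ι ι ℝ}

lemma charpoly_eval' {ι : Type*} [Fintype ι] [DecidableEq ι] (A : Matrix ι ι ℝ) (r : ℝ) :
    A.charpoly.eval r = (Matrix.diagonal (fun _ => r) - A).det := by
  rw [Matrix.charpoly, ← Polynomial.coe_evalRingHom, RingHom.map_det]
  congr 1
  ext i j
  by_cases h : i = j <;> simp [h, Matrix.charmatrix_apply, Matrix.diagonal_apply]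

lemma herm_charpoly {ι : Type*} [Fintype ι] [DecidableEq ι] {A : Matrix ι ι ℝ}
    (hA : A.IsHermitian) : A.charpoly = ∏ i, (X - C (hA.eigenvalues i)) := by
  apply Polynomial.funext
  intro r
  rw [charpoly_eval']
  have hU : (hA.eigenvectorUnitary : Matrix ι ι ℝ) * star (hA.eigenvectorUnitary : Matrix ι ι ℝ) = 1 :=
    (Matrix.mem_unitaryGroup_iff).mp (hA.eigenvectorUnitary).2
  have key : (hA.eigenvectorUnitary : Matrix ι ι ℝ) *
        (Matrix.diagonal (fun i => r - hA.eigenvalues i)) *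
        star (hA.eigenvectorUnitary : Matrix ι ι ℝ) = Matrix.diagonal (fun _ => r) - A := by
    have h1 : (Matrix.diagonal (fun _ : ι => r)) =
        (hA.eigenvectorUnitary : Matrix ι ι ℝ) * Matrix.diagonal (fun _ : ι => r) *
          star (hA.eigenvectorUnitary : Matrix ι ι ℝ) := by
      rw [← Matrix.smul_one_eq_diagonal, Matrix.mul_smul, mul_one, smul_mul_assoc, hU,
        Matrix.smul_one_eq_diagonal]
    have h2 := hA.spectral_theorem
    rw [Unitary.conjStarAlgAut_apply] at h2
    have hd : (Matrix.diagonal (fun i => r - hA.eigenvalues i)) =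
        Matrix.diagonal (fun _ : ι => r) - Matrix.diagonal (RCLike.ofReal ∘ hA.eigenvalues) := by
      rw [Matrix.diagonal_sub]; rfl
    rw [hd, Matrix.mul_sub, Matrix.sub_mul, ← h2, ← h1]
  rw [← key, Matrix.det_mul_right_comm, hU, one_mul, Matrix.det_diagonal]
  simp [Polynomial.eval_prod]

lemma herm_roots (hA : A.IsHermitian)
    (hcp : A.charpoly = ∏ i, (X - C (hA.eigenvalues i))) :
    A.charpoly.roots = Finset.univ.val.map hA.eigenvalues := by
  rw [hcp]
  have : ∏ i, (X - C (hA.eigenvalues i)) =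
      (Multiset.map (fun a => X - C a) (Finset.univ.val.map hA.eigenvalues)).prod := by
    rw [Multiset.map_map]; rfl
  rw [this, Polynomial.roots_multiset_prod_X_sub_C]

lemma lmin_le_eig (hA : A.IsHermitian)
    (hcp : A.charpoly = ∏ i, (X - C (hA.eigenvalues i))) (i : ι) :
    lmin A ≤ hA.eigenvalues i := by
  set l := A.charpoly.roots.sort (· ≤ ·) with hl
  have hmem : hA.eigenvalues i ∈ l := by
    rw [hl, Multiset.mem_sort, herm_roots hA hcp]
    exact Multiset.mem_map_of_mem _ (Finset.mem_univ i)
  have hlen : 0 < l.length := List.length_pos_iff.mpr (List.ne_nil_of_mem hmem)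
  obtain ⟨j, hj⟩ := List.get_of_mem hmem
  have hsort : l.Pairwise (· ≤ ·) := Multiset.pairwise_sort _ _
  have h0 : lmin A = l.get ⟨0, hlen⟩ := by
    rw [lmin, eigvalDesc, ← hl, Nat.sub_self]
    exact List.getD_eq_get l 0 ⟨0, hlen⟩
  rw [h0, ← hj]
  exact List.Pairwise.rel_get_of_le hsort (by simp [Fin.le_def])

lemma lmin_is_eig [Nonempty ι] (hA : A.IsHermitian)
    (hcp : A.charpoly = ∏ i, (X - C (hA.eigenvalues i))) :
    ∃ i, hA.eigenvalues i = lmin A := by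
  set l := A.charpoly.roots.sort (· ≤ ·) with hl
  have hlen : l.length = Fintype.card ι := by
    rw [hl, Multiset.length_sort, herm_roots hA hcp]
    simp
  have hpos : 0 < l.length := by rw [hlen]; exact Fintype.card_pos
  have h0 : lmin A = l.get ⟨0, hpos⟩ := by
    rw [lmin, eigvalDesc, ← hl, Nat.sub_self]
    exact List.getD_eq_get l 0 ⟨0, hpos⟩
  have hmem : l.get ⟨0, hpos⟩ ∈ l := List.get_mem l ⟨0, hpos⟩
  have hmem2 : l.get ⟨0, hpos⟩ ∈ A.charpoly.roots :=
    (Multiset.mem_sort (α := ℝ) (· ≤ ·)).mp hmem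
  rw [herm_roots hA hcp, Multiset.mem_map] at hmem2
  obtain ⟨i, -, hi⟩ := hmem2
  exact ⟨i, by rw [hi, h0]⟩

lemma quadform_repr (hA : A.IsHermitian) (x : ι → ℝ) :
    x ⬝ᵥ A *ᵥ x = ∑ i, hA.eigenvalues i *
      ((star (hA.eigenvectorUnitary : Matrix ι ι ℝ) *ᵥ x) i)^2 := by
  set U := (hA.eigenvectorUnitary : Matrix ι ι ℝ)
  set y := star U *ᵥ x with hy
  have hst : star U = Uᵀ := by
    rw [Matrix.star_eq_conjTranspose, Matrix.conjTranspose_eq_transpose_of_trivial]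
  conv_lhs => rw [hA.spectral_theorem, Unitary.conjStarAlgAut_apply]
  rw [← Matrix.mulVec_mulVec, ← Matrix.mulVec_mulVec, Matrix.dotProduct_mulVec,
    ← Matrix.mulVec_transpose, ← hst]
  have hdiag : Matrix.diagonal (RCLike.ofReal ∘ hA.eigenvalues) *ᵥ y
      = fun i => hA.eigenvalues i * y i := by
    ext i; simp [Matrix.mulVec_diagonal]
  rw [hdiag]
  simp [dotProduct, pow_two]; ring_nf
  exact Finset.sum_congr rfl fun i _ => by ring

lemma dot_self_repr (hA : A.IsHermitian) (x : ι → ℝ) :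
    x ⬝ᵥ x = ∑ i, ((star (hA.eigenvectorUnitary : Matrix ι ι ℝ) *ᵥ x) i)^2 := by
  set U := (hA.eigenvectorUnitary : Matrix ι ι ℝ)
  set y := star U *ᵥ x with hy
  have hU : U * star U = 1 := (Matrix.mem_unitaryGroup_iff).mp (hA.eigenvectorUnitary).2
  have hst : star U = Uᵀ := by
    rw [Matrix.star_eq_conjTranspose, Matrix.conjTranspose_eq_transpose_of_trivial]
  have : y ⬝ᵥ y = x ⬝ᵥ x := by
    rw [hy, hst, Matrix.dotProduct_mulVec, ← Matrix.mulVec_transpose, Matrix.transpose_transpose,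
      Matrix.mulVec_mulVec, ← hst, hU, Matrix.one_mulVec]
  rw [← this]
  simp [dotProduct, pow_two]

lemma lmin_quadform_le (hA : A.IsHermitian)
    (hcp : A.charpoly = ∏ i, (X - C (hA.eigenvalues i))) (x : ι → ℝ) :
    lmin A * (x ⬝ᵥ x) ≤ x ⬝ᵥ A *ᵥ x := by
  rw [quadform_repr hA x, dot_self_repr hA x, Finset.mul_sum]
  exact Finset.sum_le_sum fun i _ =>
    mul_le_mul_of_nonneg_right (lmin_le_eig hA hcp i) (sq_nonneg _)

lemma le_lmin_of_quadform [Nonempty ι] (hA : A.IsHermitian)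
    (hcp : A.charpoly = ∏ i, (X - C (hA.eigenvalues i))) (μ : ℝ)
    (h : ∀ x : ι → ℝ, μ * (x ⬝ᵥ x) ≤ x ⬝ᵥ A *ᵥ x) : μ ≤ lmin A := by
  obtain ⟨i, hi⟩ := lmin_is_eig hA hcp
  set v : ι → ℝ := ⇑(hA.eigenvectorBasis i) with hv
  have hv0 : v ≠ 0 := by
    intro h0
    have : ‖hA.eigenvectorBasis i‖ = 1 := hA.eigenvectorBasis.orthonormal.1 i
    rw [show hA.eigenvectorBasis i = 0 from PiLp.ext (congrFun h0)] at this
    simp at this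
  have hAv : A *ᵥ v = hA.eigenvalues i • v := hA.mulVec_eigenvectorBasis i
  have hq : v ⬝ᵥ A *ᵥ v = hA.eigenvalues i * (v ⬝ᵥ v) := by
    rw [hAv, dotProduct_smul]; rfl
  have hpos : 0 < v ⬝ᵥ v := by
    rcases lt_or_eq_of_le (by simpa [dotProduct] using Finset.sum_nonneg fun j _ => mul_self_nonneg (v j) : (0:ℝ) ≤ v ⬝ᵥ v) with h' | h'
    · exact h'
    · exact absurd (dotProduct_self_eq_zero.mp h'.symm) hv0
  have h2 := h v
  rw [hq] at h2
  have h3 : μ ≤ hA.eigenvalues i := le_of_mul_le_mul_right h2 hpos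
  linarith [hi, h3]

lemma enorm'_eq (v : ι → ℝ) : enorm' v = ‖(WithLp.equiv 2 (ι → ℝ)).symm v‖ := by
  rw [EuclideanSpace.norm_eq, enorm']
  congr 1
  exact Finset.sum_congr rfl fun i _ => by simp [Real.norm_eq_abs, sq_abs]

lemma enorm'_nonneg (v : ι → ℝ) : 0 ≤ enorm' v := Real.sqrt_nonneg _

lemma enorm'_sq (v : ι → ℝ) : enorm' v ^ 2 = v ⬝ᵥ v := by
  rw [enorm', Real.sq_sqrt (Finset.sum_nonneg fun i _ => sq_nonneg _)]
  simp [dotProduct, pow_two]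

lemma specNorm_mulVec_le (A : Matrix ι ι ℝ) (v : ι → ℝ) :
    enorm' (A *ᵥ v) ≤ specNorm A * enorm' v := by
  have := (LinearMap.toContinuousLinearMap
      (Matrix.toEuclideanLin A : EuclideanSpace ℝ ι →ₗ[ℝ] EuclideanSpace ℝ ι)).le_opNorm
      ((WithLp.equiv 2 (ι → ℝ)).symm v)
  rw [LinearMap.coe_toContinuousLinearMap' ] at this
  rw [show (WithLp.equiv 2 (ι → ℝ)).symm v = WithLp.toLp 2 v from rfl, Matrix.toEuclideanLin_apply_piLp_toLp] at this
  rw [enorm'_eq, enorm'_eq]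
  exact this

lemma specNorm_le (A : Matrix ι ι ℝ) (c : ℝ) (hc : 0 ≤ c)
    (h : ∀ v : ι → ℝ, enorm' (A *ᵥ v) ≤ c * enorm' v) : specNorm A ≤ c := by
  apply ContinuousLinearMap.opNorm_le_bound _ hc
  intro x
  have h2 := h ((WithLp.equiv 2 (ι → ℝ)) x)
  rw [enorm'_eq, enorm'_eq] at h2
  simp only [LinearMap.coe_toContinuousLinearMap']
  rw [show Matrix.toEuclideanLin A x =
    (WithLp.equiv 2 (ι → ℝ)).symm (A *ᵥ (WithLp.equiv 2 (ι → ℝ)) x) from rfl]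
  simpa using h2

lemma enorm'_smul (a : ℝ) (v : ι → ℝ) : enorm' (a • v) = |a| * enorm' v := by
  rw [enorm'_eq, enorm'_eq, show (WithLp.equiv 2 (ι → ℝ)).symm (a • v) = a • (WithLp.equiv 2 (ι → ℝ)).symm v from rfl, norm_smul, Real.norm_eq_abs]

lemma enorm'_le_of_sq_le {y : ι → ℝ} {c : ℝ} (hc : 0 ≤ c)
    (h : enorm' y ^ 2 ≤ c ^ 2) : enorm' y ≤ c := by
  nlinarith [enorm'_nonneg y]

lemma cauchy_dot (y v : ι → ℝ) : (y ⬝ᵥ v) ^ 2 ≤ (y ⬝ᵥ y) * (v ⬝ᵥ v) := by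
  have := Finset.sum_mul_sq_le_sq_mul_sq Finset.univ y v
  simpa [dotProduct, pow_two] using this

lemma dot_self_nonneg' (v : ι → ℝ) : 0 ≤ v ⬝ᵥ v := by
  rw [← enorm'_sq]; positivity

lemma specNorm_inv_eq [Nonempty ι] {C : Matrix ι ι ℝ} (hC : C.PosDef)
    (hlam : 0 < lmin C) : specNorm C⁻¹ = (lmin C)⁻¹ := by
  set lam := lmin C
  have hdet : IsUnit C.det := isUnit_iff_ne_zero.mpr hC.det_pos.ne'
  have hcp := herm_charpoly hC.1
  apply le_antisymm
  · apply specNorm_le _ _ (inv_nonneg.mpr hlam.le)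
    intro v
    set y := C⁻¹ *ᵥ v with hy
    have hx : C *ᵥ y = v := by
      rw [hy, Matrix.mulVec_mulVec, Matrix.mul_nonsing_inv _ hdet, Matrix.one_mulVec]
    have h1 : lam * (y ⬝ᵥ y) ≤ y ⬝ᵥ v := by
      have := lmin_quadform_le hC.1 hcp y
      rwa [hx] at this
    have h2 := cauchy_dot y v
    apply enorm'_le_of_sq_le (mul_nonneg (inv_nonneg.mpr hlam.le) (enorm'_nonneg v))
    rw [mul_pow, enorm'_sq, enorm'_sq]
    have hyy := dot_self_nonneg' y
    have hvv := dot_self_nonneg' v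
    have hyv : 0 ≤ y ⬝ᵥ v := le_trans (mul_nonneg hlam.le hyy) h1
    have hsq : lam ^ 2 * (y ⬝ᵥ y) ^ 2 ≤ (y ⬝ᵥ y) * (v ⬝ᵥ v) := by
      nlinarith [mul_self_le_mul_self (mul_nonneg hlam.le hyy) h1]
    have key : lam ^ 2 * (y ⬝ᵥ y) ≤ v ⬝ᵥ v := by
      rcases hyy.lt_or_eq with hpos | hzero
      · nlinarith [hsq, hpos]
      · rw [← hzero]; simpa using hvv
    rw [inv_pow]
    rw [← mul_le_mul_iff_right₀ (by positivity : (0:ℝ) < lam ^ 2)]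
    calc lam ^ 2 * (y ⬝ᵥ y) ≤ v ⬝ᵥ v := key
      _ = lam ^ 2 * ((lam ^ 2)⁻¹ * (v ⬝ᵥ v)) := by
          field_simp
  · obtain ⟨i, hi⟩ := lmin_is_eig hC.1 hcp
    set v : ι → ℝ := ⇑(hC.1.eigenvectorBasis i) with hv
    have hv0 : v ≠ 0 := by
      intro h0
      have h1 : ‖hC.1.eigenvectorBasis i‖ = 1 := hC.1.eigenvectorBasis.orthonormal.1 i
      rw [show hC.1.eigenvectorBasis i = 0 from PiLp.ext (congrFun h0)] at h1
      simp at h1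
    have hCv : C *ᵥ v = lam • v := by
      rw [hC.1.mulVec_eigenvectorBasis i, hi]
    have hinvv : C⁻¹ *ᵥ v = lam⁻¹ • v := by
      have h3 : C⁻¹ *ᵥ (C *ᵥ v) = v := by
        rw [Matrix.mulVec_mulVec, Matrix.nonsing_inv_mul _ hdet, Matrix.one_mulVec]
      rw [hCv, Matrix.mulVec_smul] at h3
      have h4 : lam⁻¹ • (lam • (C⁻¹ *ᵥ v)) = lam⁻¹ • v := by rw [h3]
      rwa [smul_smul, inv_mul_cancel₀ hlam.ne', one_smul] at h4
    have hnorm : enorm' (C⁻¹ *ᵥ v) = lam⁻¹ * enorm' v := by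
      rw [hinvv, enorm'_smul, abs_of_pos (by positivity)]
    have hle := specNorm_mulVec_le C⁻¹ v
    rw [hnorm] at hle
    have hvpos : 0 < enorm' v := by
      rcases (enorm'_nonneg v).lt_or_eq with h | h
      · exact h
      · exfalso
        apply hv0
        have : v ⬝ᵥ v = 0 := by rw [← enorm'_sq, ← h]; ring
        exact dotProduct_self_eq_zero.mp this
    exact le_of_mul_le_mul_right hle hvpos

set_option maxHeartbeats 1000000 in
lemma key_scalar (lam beta q K2 Z P T mu : ℝ)
    (hZ : 0 ≤ Z) (hK2 : 0 ≤ K2) (hbeta : 0 ≤ beta) (hlt : beta < lam)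
    (hq : lam * K2 ≤ q) (hP : P ^ 2 ≤ Z * K2)
    (hmu : mu * (lam - beta) = (beta - q) * (lam - beta) - beta * K2 * lam)
    (hmupos : 0 < mu) :
    mu * (Z - 2 * T * P + T ^ 2 * K2 + T ^ 2) ≤ lam * Z + (beta - q) * T ^ 2 := by
  have hd : 0 < lam - beta := by linarith
  have hlam : 0 < lam := by linarith
  have hq0 : 0 ≤ q := le_trans (mul_nonneg hlam.le hK2) hq
  have hbmu : mu ≤ beta := by nlinarith [mul_nonneg (mul_nonneg hbeta hK2) hlam.le]
  set A := lam - mu with hA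
  set D := beta - q - mu * (K2 + 1) with hD
  have hApos : 0 < A := by simp [hA]; linarith
  have hDd : D * (lam - beta) = beta * K2 * lam - mu * K2 * (lam - beta) := by
    simp only [hD]; nlinarith [hmu]
  have hAD : mu ^ 2 * K2 ≤ A * D := by
    have hident : (A * D - mu ^ 2 * K2) * (lam - beta) = K2 * lam ^ 2 * (beta - mu) := by
      simp only [hA]; nlinarith [hDd]
    nlinarith [mul_nonneg (mul_nonneg hK2 (sq_nonneg lam)) (by linarith : (0:ℝ) ≤ beta - mu), hident, hd]
  have h1 : 2 * A * mu * T * P ≤ A ^ 2 * Z + mu ^ 2 * K2 * T ^ 2 := by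
    have hsq : (2 * A * mu * T * P) ^ 2 ≤ (A ^ 2 * Z + mu ^ 2 * K2 * T ^ 2) ^ 2 := by
      nlinarith [sq_nonneg (A ^ 2 * Z - mu ^ 2 * K2 * T ^ 2),
        mul_nonneg (mul_nonneg (sq_nonneg A) (sq_nonneg (mu * T))) (sub_nonneg.2 hP),
        sq_nonneg (A * mu * T)]
    have hrhs : 0 ≤ A ^ 2 * Z + mu ^ 2 * K2 * T ^ 2 := by positivity
    nlinarith [hsq, hrhs]
  have h1m : -(A ^ 2 * Z + mu ^ 2 * K2 * T ^ 2) ≤ 2 * A * mu * T * P := by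
    have hsq : (2 * A * mu * T * P) ^ 2 ≤ (A ^ 2 * Z + mu ^ 2 * K2 * T ^ 2) ^ 2 := by
      nlinarith [sq_nonneg (A ^ 2 * Z - mu ^ 2 * K2 * T ^ 2),
        mul_nonneg (mul_nonneg (sq_nonneg A) (sq_nonneg (mu * T))) (sub_nonneg.2 hP),
        sq_nonneg (A * mu * T)]
    have hrhs : 0 ≤ A ^ 2 * Z + mu ^ 2 * K2 * T ^ 2 := by positivity
    nlinarith [hsq, hrhs]
  have h3 : mu ^ 2 * K2 * T ^ 2 ≤ A * D * T ^ 2 :=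
    mul_le_mul_of_nonneg_right hAD (sq_nonneg T)
  have h4 : 0 ≤ A * (A * Z + 2 * mu * T * P + D * T ^ 2) := by nlinarith [h1m, h3]
  have h5 : 0 ≤ A * Z + 2 * mu * T * P + D * T ^ 2 :=
    nonneg_of_mul_nonneg_right h4 hApos
  simp only [hA, hD] at h5
  nlinarith [h5]

lemma lmin_empty {ι : Type*} [Fintype ι] [DecidableEq ι] [IsEmpty ι] (A : Matrix ι ι ℝ) :
    lmin A = 0 := by
  have h1 : A.charpoly = 1 := by
    rw [Matrix.charpoly, Matrix.det_isEmpty]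
  rw [lmin, eigvalDesc, h1, Polynomial.roots_one]
  simp


lemma symm_dot {ι : Type*} [Fintype ι] {M : Matrix ι ι ℝ} (hM : M.IsHermitian)
    (u v : ι → ℝ) : u ⬝ᵥ (M *ᵥ v) = v ⬝ᵥ (M *ᵥ u) := by
  have hMT : Mᵀ = M := by
    rw [← Matrix.conjTranspose_eq_transpose_of_trivial]; exact hM
  rw [Matrix.dotProduct_mulVec, ← Matrix.mulVec_transpose, hMT, dotProduct_comm]


end Aux

theorem stmt4 (p : ℕ) (B : Matrix (Fin p ⊕ Fin 1) (Fin p ⊕ Fin 1) ℝ)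
    (B11 C11 C12 : Matrix (Fin p) (Fin p) ℝ) (b : Fin p → ℝ) (β : ℝ)
    (hBdef : B = fromBlocks B11 (of fun i (_ : Fin 1) => b i)
      (of fun (_ : Fin 1) j => b j) (of fun _ _ => β))
    (hB : B.PosSemidef) (hrank : p ≤ B.rank)
    (hsplit : B11 = C11 + C12) (hC11 : C11.PosDef) (hgap : β < lmin C11)
    (hC12 : C12.PosSemidef) :
    lmin B ≥ β - b ⬝ᵥ (C11⁻¹ *ᵥ b)
      - β * enorm' (C11⁻¹ *ᵥ b) ^ 2 / (1 - β * specNorm C11⁻¹) := by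
  have hBH := hB.1
  have hcpB := herm_charpoly hBH
  -- quadratic form of B on Sum.elim vectors
  have quad : ∀ (y : Fin p → ℝ) (t0 : ℝ),
      (Sum.elim y (fun _ => t0)) ⬝ᵥ B *ᵥ (Sum.elim y (fun _ => t0))
        = y ⬝ᵥ (B11 *ᵥ y) + 2 * t0 * (b ⬝ᵥ y) + β * t0 ^ 2 := by
    intro y t0
    rw [hBdef, Matrix.fromBlocks_mulVec, sumElim_dotProduct_sumElim]
    have e1 : y ⬝ᵥ ((of fun i (_ : Fin 1) => b i) *ᵥ (fun _ => t0)) = t0 * (b ⬝ᵥ y) := by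
      simp only [Matrix.mulVec, dotProduct, Matrix.of_apply, Fin.sum_univ_one,
        Finset.mul_sum]
      exact Finset.sum_congr rfl fun i _ => by ring
    have e2 : ((of fun (_ : Fin 1) j => b j) *ᵥ y) = fun _ => b ⬝ᵥ y := by
      funext j; simp [Matrix.mulVec, dotProduct]
    have e3 : ((of fun (_ : Fin 1) (_ : Fin 1) => β) *ᵥ (fun _ => t0)) = fun _ => β * t0 := by
      funext j; simp [Matrix.mulVec, dotProduct]
    simp only [Sum.elim_comp_inl, Sum.elim_comp_inr, dotProduct_add]
    rw [e1, e2, e3]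
    have e4 : (fun (_ : Fin 1) => t0) ⬝ᵥ (fun _ => b ⬝ᵥ y) = t0 * (b ⬝ᵥ y) := by
      simp [dotProduct]
    have e5 : (fun (_ : Fin 1) => t0) ⬝ᵥ (fun _ => β * t0) = β * t0 ^ 2 := by
      simp [dotProduct]; ring
    rw [e4, e5]; ring
  have hβ0 : 0 ≤ β := by
    have h0 := hB.dotProduct_mulVec_nonneg (Sum.elim (0 : Fin p → ℝ) (fun _ => 1))
    rw [star_trivial] at h0
    rw [quad 0 1] at h0
    simpa using h0
  set lam := lmin C11 with hlamdef
  have hlam : 0 < lam := lt_of_le_of_lt hβ0 hgap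
  rcases Nat.eq_zero_or_pos p with hp | hp
  · exfalso
    subst hp
    have h00 : lam = 0 := by rw [hlamdef]; exact lmin_empty C11
    linarith
  haveI : Nonempty (Fin p) := ⟨⟨0, hp⟩⟩
  have hdet : IsUnit C11.det := isUnit_iff_ne_zero.mpr hC11.det_pos.ne'
  have hs : specNorm C11⁻¹ = lam⁻¹ := specNorm_inv_eq hC11 hlam
  set c : Fin p → ℝ := C11⁻¹ *ᵥ b with hc
  set q : ℝ := b ⬝ᵥ c with hqdef
  set K2 : ℝ := c ⬝ᵥ c with hK2def
  have hCb : C11 *ᵥ c = b := by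
    rw [hc, Matrix.mulVec_mulVec, Matrix.mul_nonsing_inv _ hdet, Matrix.one_mulVec]
  have hqc : q = c ⬝ᵥ (C11 *ᵥ c) := by rw [hCb, hqdef, dotProduct_comm]
  have hqK : lam * K2 ≤ q := by
    rw [hqc, hK2def]
    exact lmin_quadform_le hC11.1 (herm_charpoly hC11.1) c
  have hK2 : 0 ≤ K2 := dot_self_nonneg' c
  have henc : enorm' c ^ 2 = K2 := enorm'_sq c
  set mu : ℝ := β - q - β * enorm' c ^ 2 / (1 - β * specNorm C11⁻¹) with hmudef
  show mu ≤ lmin B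
  have hden : 1 - β * specNorm C11⁻¹ = (lam - β) / lam := by
    rw [hs]; field_simp
  have hmu : mu * (lam - β) = (β - q) * (lam - β) - β * K2 * lam := by
    have hne : lam - β ≠ 0 := by linarith
    rw [hmudef, hden, ← henc]
    field_simp
  rcases le_or_gt mu 0 with hmu0 | hmu0
  · have h0 : (0:ℝ) ≤ lmin B := by
      apply le_lmin_of_quadform hBH hcpB
      intro x
      have := hB.dotProduct_mulVec_nonneg x
      rw [star_trivial] at this
      simpa using this
    linarith
  · apply le_lmin_of_quadform hBH hcpB
    intro x
    set y : Fin p → ℝ := fun i => x (Sum.inl i) with hy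
    set t0 : ℝ := x (Sum.inr 0) with ht0
    have hxeq : x = Sum.elim y (fun _ => t0) := by
      funext i
      cases i with
      | inl i => rfl
      | inr j => rw [Sum.elim_inr, ht0, Fin.eq_zero j]
    set z : Fin p → ℝ := y + t0 • c with hz
    set Z : ℝ := z ⬝ᵥ z with hZdef
    set P : ℝ := z ⬝ᵥ c with hPdef
    -- expansions
    have hexp1 : z ⬝ᵥ (C11 *ᵥ z) = y ⬝ᵥ (C11 *ᵥ y) + 2 * t0 * (b ⬝ᵥ y) + t0 ^ 2 * q := by
      rw [hz]
      rw [Matrix.mulVec_add, Matrix.mulVec_smul, hCb]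
      rw [add_dotProduct, dotProduct_add, dotProduct_add]
      rw [smul_dotProduct, smul_dotProduct, dotProduct_smul,
        dotProduct_smul]
      have hsym : y ⬝ᵥ b = b ⬝ᵥ y := dotProduct_comm _ _
      have hsym2 : c ⬝ᵥ (C11 *ᵥ y) = y ⬝ᵥ b := by
        rw [symm_dot hC11.1 c y, hCb]
      rw [hsym2, hqc]
      simp only [smul_eq_mul]
      rw [hsym]
      ring_nf
      rw [hCb]
    have hyz : y = z - t0 • c := by rw [hz]; abel
    have hexp2 : y ⬝ᵥ y = Z - 2 * t0 * P + t0 ^ 2 * K2 := by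
      rw [hyz]
      rw [sub_dotProduct, dotProduct_sub, dotProduct_sub,
        smul_dotProduct, dotProduct_smul, dotProduct_smul]
      have hcz : c ⬝ᵥ z = z ⬝ᵥ c := dotProduct_comm _ _
      rw [hcz]
      simp only [smul_eq_mul, smul_dotProduct]
      ring
    have hxx : x ⬝ᵥ x = y ⬝ᵥ y + t0 ^ 2 := by
      rw [hxeq, sumElim_dotProduct_sumElim]
      simp [dotProduct, pow_two]
    have hxBx : x ⬝ᵥ B *ᵥ x = y ⬝ᵥ (B11 *ᵥ y) + 2 * t0 * (b ⬝ᵥ y) + β * t0 ^ 2 := by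
      rw [hxeq]; exact quad y t0
    have hB11 : y ⬝ᵥ (C11 *ᵥ y) ≤ y ⬝ᵥ (B11 *ᵥ y) := by
      rw [hsplit, Matrix.add_mulVec, dotProduct_add]
      have h12 := hC12.dotProduct_mulVec_nonneg y
      rw [star_trivial] at h12
      linarith
    have hRay : lam * Z ≤ z ⬝ᵥ (C11 *ᵥ z) :=
      lmin_quadform_le hC11.1 (herm_charpoly hC11.1) z
    have hCS : P ^ 2 ≤ Z * K2 := cauchy_dot z c
    have hkey := key_scalar lam β q K2 Z P t0 mu (dot_self_nonneg' z) hK2 hβ0 hgap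
      hqK hCS hmu hmu0
    calc mu * (x ⬝ᵥ x) = mu * (Z - 2 * t0 * P + t0 ^ 2 * K2 + t0 ^ 2) := by
          rw [hxx, hexp2]
      _ ≤ lam * Z + (β - q) * t0 ^ 2 := hkey
      _ ≤ x ⬝ᵥ B *ᵥ x := by rw [hxBx]; linarith [hRay, hB11, hexp1]
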